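/- Let T be a pruned tree of sequences. Then lim T, as a subspace of the Baire space, is compact if and only if T is finitely branching, i.e. every t ∈ T has only finitely many successors in T. -/

import Mathlib

open scoped ENNReal
open MeasureTheory

noncomputable section

/-- A tree of sequences: a nonempty set of finite lists of naturals closed under prefixes. -/
def IsTree (T : Set (List ℕ)) : Prop :=
  T.Nonempty ∧ ∀ s t : List ℕ, s <+: t → t ∈ T → s ∈ T

/-- `t` is a maximal node of `T`: it has no successor in `T`. -/
def IsMaxNode (T : Set (List ℕ)) (t : List ℕ) : Prop :=
  ∀ k : ℕ, t ++ [k] ∉ T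

/-- A probability tree on `T`. -/
def IsProbTree (T : Set (List ℕ)) (p : List ℕ → ℕ → ℝ≥0∞) : Prop :=
  ∀ t ∈ T, ¬ IsMaxNode T t →
    (∀ k : ℕ, t ++ [k] ∉ T → p t k = 0) ∧ (∑' k : ℕ, p t k = 1)

/-- The measure induced by a probability tree: `Ξ_p(t) = ∏_{i<|t|} p (t↾i) (t i)`. -/
def Xi (p : List ℕ → ℕ → ℝ≥0∞) (t : List ℕ) : ℝ≥0∞ :=
  ∏ i ∈ Finset.range t.length, p (t.take i) (t.getD i 0)

/-- An inductive probability measure on `T`. -/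
def IsIPM (T : Set (List ℕ)) (ξ : List ℕ → ℝ≥0∞) : Prop :=
  ξ [] = 1 ∧ ∀ t ∈ T, ¬ IsMaxNode T t →
    ξ t = ∑' k : {k : ℕ // t ++ [k] ∈ T}, ξ (t ++ [k.1])

/-- The set of infinite branches of `T`. -/
def limT (T : Set (List ℕ)) : Set (ℕ → ℕ) :=
  {x | ∀ n : ℕ, (List.range n).map x ∈ T}

/-- `T` is pruned: every node has a successor in `T`. -/
def Pruned (T : Set (List ℕ)) : Prop := ∀ t ∈ T, ∃ k : ℕ, t ++ [k] ∈ T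

/-- The basic clopen set `[t]` of branches through `t`. -/
def cyl (T : Set (List ℕ)) (t : List ℕ) : Set ↥(limT T) :=
  {x | (List.range t.length).map x.1 = t}


section Aux

lemma restr_succ (x : ℕ → ℕ) (n : ℕ) :
    (List.range (n+1)).map x = (List.range n).map x ++ [x n] := by
  simp [List.range_succ]

lemma restr_clopen (n : ℕ) (A : Set (List ℕ)) :
    IsClopen {x : ℕ → ℕ | (List.range n).map x ∈ A} := by
  have hcont : Continuous (fun x : ℕ → ℕ => fun i : Fin n => x i) :=
    continuous_pi fun i => continuous_apply _
  have : {x : ℕ → ℕ | (List.range n).map x ∈ A}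
      = (fun x : ℕ → ℕ => fun i : Fin n => x i) ⁻¹' {f | List.ofFn f ∈ A} := by
    ext x
    rw [Set.mem_preimage, Set.mem_setOf_eq, Set.mem_setOf_eq, List.ofFn_eq_map,
      show List.map (fun i : Fin n => x ↑i) (List.finRange n) = List.map x (List.range n) from
        by exact List.ext_getElem (by simp) (by intro i h1 h2; simp)]
  rw [this]
  exact (isClopen_discrete _).preimage hcont

lemma getD_restr (x : ℕ → ℕ) (n : ℕ) :
    ((List.range (n+1)).map x).getD n 0 = x n := by
  rw [restr_succ]
  rw [List.getD_eq_getElem?_getD]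
  simp

lemma exists_branch {T : Set (List ℕ)} (hT : IsTree T) (hpr : Pruned T)
    {t : List ℕ} (ht : t ∈ T) :
    ∃ x : ℕ → ℕ, (∀ n, (List.range n).map x ∈ T) ∧ (List.range t.length).map x = t := by
  classical
  let g : List ℕ → List ℕ := fun s =>
    s ++ [if h : s ∈ T then Classical.choose (hpr s h) else 0]
  let f : ℕ → List ℕ := fun n => g^[n] t
  have hf0 : f 0 = t := rfl
  have hfs : ∀ n, f (n+1) = g (f n) := fun n => Function.iterate_succ_apply' g n t
  have hmem : ∀ n, f n ∈ T := by
    intro n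
    induction n with
    | zero => exact ht
    | succ n ih =>
      rw [hfs]
      show f n ++ [_] ∈ T
      rw [dif_pos ih]
      exact Classical.choose_spec (hpr (f n) ih)
  have hlen : ∀ n, (f n).length = t.length + n := by
    intro n
    induction n with
    | zero => rfl
    | succ n ih => rw [hfs]; show (f n ++ [_]).length = _; simp [ih]; omega
  have hpre : ∀ n, f n <+: f (n+1) := by
    intro n; rw [hfs]; exact ⟨[_], rfl⟩
  have hpre' : ∀ m n, m ≤ n → f m <+: f n := by
    intro m n h
    induction n with
    | zero => cases Nat.le_zero.mp h; exact List.prefix_rfl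
    | succ n ih =>
      rcases Nat.eq_or_lt_of_le h with h' | h'
      · rw [h']
      · exact (ih (by omega)).trans (hpre n)
  let x : ℕ → ℕ := fun n => (f (n+1)).getD n 0
  have key : ∀ n, (List.range n).map x = (f n).take n := by
    intro n
    induction n with
    | zero => simp
    | succ n ih =>
      rw [List.range_succ, List.map_append, ih]
      have h1 : (f n).take n = (f (n+1)).take n := by
        obtain ⟨u, hu⟩ := hpre n
        rw [← hu, List.take_append_of_le_length (by rw [hlen]; omega)]
      have h2 : (f (n+1)).take (n+1) = (f (n+1)).take n ++ ((f (n+1))[n]?).toList :=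
        List.take_succ
      have h3 : (f (n+1))[n]? = some (x n) := by
        have : n < (f (n+1)).length := by rw [hlen]; omega
        rw [List.getElem?_eq_getElem this]
        show _ = some ((f (n+1)).getD n 0)
        rw [List.getD_eq_getElem?_getD, List.getElem?_eq_getElem this]
        rfl
      rw [h2, h3, h1]
      rfl
  refine ⟨x, ?_, ?_⟩
  · intro n
    rw [key]
    exact hT.2 _ _ (List.take_prefix n (f n)) (hmem n)
  · rw [key]
    obtain ⟨u, hu⟩ := hpre' 0 t.length (Nat.zero_le _)
    rw [hf0] at hu
    rw [← hu, List.take_left]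

lemma level_finite {T : Set (List ℕ)} (hT : IsTree T)
    (hfin : ∀ t ∈ T, {k : ℕ | t ++ [k] ∈ T}.Finite) :
    ∀ n, {s : List ℕ | s ∈ T ∧ s.length = n}.Finite := by
  intro n
  induction n with
  | zero =>
    refine Set.Finite.subset (Set.finite_singleton []) ?_
    rintro s ⟨-, hs⟩
    exact List.length_eq_zero_iff.mp hs
  | succ n ih =>
    refine Set.Finite.subset
      (Set.Finite.biUnion ih (fun u hu => ((hfin u hu.1).image (fun k => u ++ [k])))) ?_
    rintro s ⟨hsT, hslen⟩
    have hn : n < s.length := by omega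
    have htk : s.take n ++ [s.getD n 0] = s := by
      have h1 := List.take_concat_get hn
      rw [List.concat_eq_append] at h1
      rw [List.getD_eq_getElem?_getD, List.getElem?_eq_getElem hn]
      simp only [Option.getD_some]
      rw [h1]
      exact List.take_of_length_le (by omega)
    exact Set.mem_biUnion
      (show s.take n ∈ {s : List ℕ | s ∈ T ∧ s.length = n} from
        ⟨hT.2 _ _ (List.take_prefix n s) hsT, by simp [List.length_take]; omega⟩)
      ⟨s.getD n 0, show s.take n ++ [s.getD n 0] ∈ T by rw [htk]; exact hsT, htk⟩

end Aux

theorem stmt8 (T : Set (List ℕ)) (hT : IsTree T) (hpr : Pruned T) :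
    CompactSpace ↥(limT T) ↔ ∀ t ∈ T, {k : ℕ | t ++ [k] ∈ T}.Finite := by
  constructor
  · -- compact → finitely branching
    intro hcomp t ht
    by_contra hinf
    set n := t.length with hn
    let U : ℕ → Set ↥(limT T) := fun k =>
      Subtype.val ⁻¹' ({x : ℕ → ℕ | (List.range n).map x ∈ ({t} : Set (List ℕ))}ᶜ
        ∪ {x : ℕ → ℕ | x n = k})
    have hUopen : ∀ k, IsOpen (U k) := by
      intro k
      refine IsOpen.preimage continuous_subtype_val (IsOpen.union ?_ ?_)
      · exact (restr_clopen n {t}).compl.2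
      · exact (isOpen_discrete ({k} : Set ℕ)).preimage
          (continuous_apply n : Continuous fun x : ℕ → ℕ => x n)
    have hcover : (Set.univ : Set ↥(limT T)) ⊆ ⋃ k, U k := by
      intro x _
      exact Set.mem_iUnion.mpr ⟨x.1 n, Or.inr rfl⟩
    obtain ⟨s, hs⟩ := hcomp.isCompact_univ.elim_finite_subcover U hUopen hcover
    have hinf' : {k : ℕ | t ++ [k] ∈ T}.Infinite := hinf
    obtain ⟨k₀, hk₀⟩ := (hinf'.diff s.finite_toSet).nonempty
    obtain ⟨hk₀T, hk₀s⟩ := hk₀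
    obtain ⟨x, hx, hxt⟩ := exists_branch hT hpr hk₀T
    have hlen1 : (t ++ [k₀]).length = n + 1 := by simp [hn]
    rw [hlen1] at hxt
    rw [restr_succ] at hxt
    obtain ⟨hxrt, hxn⟩ := List.append_inj' hxt rfl
    have hxn' : x n = k₀ := by simpa using hxn
    have hxmem : x ∈ limT T := hx
    have := hs (Set.mem_univ (⟨x, hxmem⟩ : ↥(limT T)))
    rw [Set.mem_iUnion₂] at this
    obtain ⟨k, hks, hk⟩ := this
    rcases hk with hk | hk
    · exact hk hxrt
    · have : k = k₀ := (show x n = k from hk).symm.trans hxn'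
      rw [this] at hks
      exact hk₀s hks
  · -- finitely branching → compact
    intro hfin
    rw [← isCompact_iff_compactSpace]
    have Lfin := level_finite hT hfin
    set S : ℕ → Set ℕ := fun n =>
      (fun s : List ℕ => s.getD n 0) '' {s : List ℕ | s ∈ T ∧ s.length = n + 1} with hS
    have hSfin : ∀ n, (S n).Finite := fun n => (Lfin (n+1)).image _
    have hsub : limT T ⊆ Set.pi Set.univ S := by
      intro x hx m _
      refine ⟨(List.range (m+1)).map x, ⟨hx (m+1), by simp⟩, getD_restr x m⟩
    have hKcomp : IsCompact (Set.pi Set.univ S) :=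
      isCompact_univ_pi fun n => (hSfin n).isCompact
    have hclosed : IsClosed (limT T) := by
      have : limT T = ⋂ n, {x : ℕ → ℕ | (List.range n).map x ∈ T} := by
        ext x
        simp [limT, Set.mem_iInter]
      rw [this]
      exact isClosed_iInter fun n => (restr_clopen n T).1
    exact IsCompact.of_isClosed_subset hKcomp hclosed hsub
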